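/- Let $\mathcal{D}$ be a bounded sequence of integers $(d_k)_{k\ge 1}$ with every $d_k \ge 2$, let $0 < i < 1$, and let $c > 0$. If $q_1, q_2 \in \mathbb{N}$ both satisfy $|q_s|_{\mathcal{D}} \le (c/q_s)^i$ for $s = 1,2$, then $\gcd(q_1, q_2) \ge c^{-i} \min(q_1, q_2)^i$. -/

import Mathlib

/-- `Dprod d n = d 0 * d 1 * ... * d (n-1)`, i.e. the product of the first `n`
terms of the sequence `d` (so `Dprod d 0 = 1`). -/
def Dprod (d : ℕ → ℕ) (n : ℕ) : ℕ := ∏ k ∈ Finset.range n, d k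

/-- The `𝒟`-adic pseudo absolute value `|q|_𝒟 = inf {1 / D_n : q ∈ D_n ℤ}`. -/
noncomputable def pseudoAbs (d : ℕ → ℕ) (q : ℕ) : ℝ :=
  sInf {x : ℝ | ∃ n : ℕ, Dprod d n ∣ q ∧ x = 1 / (Dprod d n : ℝ)}

/-- Distance from a real number to its nearest integer. -/
noncomputable def distNearestInt (x : ℝ) : ℝ := |x - round x|

/-- The set of mixed `(i,j)`-badly approximable numbers `Bad_𝒟(i,j)`. -/
def BadD (d : ℕ → ℕ) (i j : ℝ) : Set ℝ :=
  {x : ℝ | ∃ c : ℝ, 0 < c ∧ ∀ q : ℕ, 0 < q →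
    max (pseudoAbs d q ^ (1 / i)) (distNearestInt ((q : ℝ) * x) ^ (1 / j)) > c / (q : ℝ)}

lemma Dprod_pos (d : ℕ → ℕ) (hd2 : ∀ k, 2 ≤ d k) (n : ℕ) : 0 < Dprod d n :=
  Finset.prod_pos (fun k _ => lt_of_lt_of_le two_pos (hd2 k))

lemma two_pow_le_Dprod (d : ℕ → ℕ) (hd2 : ∀ k, 2 ≤ d k) (n : ℕ) : 2 ^ n ≤ Dprod d n := by
  have := Finset.prod_le_prod' (s := Finset.range n) (f := fun _ => 2) (g := d) (fun k _ => hd2 k)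
  simpa [Dprod] using this

lemma Dprod_dvd (d : ℕ → ℕ) {m n : ℕ} (h : m ≤ n) : Dprod d m ∣ Dprod d n :=
  Finset.prod_dvd_prod_of_subset _ _ _ (Finset.range_subset_range.mpr h)

lemma pseudoAbs_attained (d : ℕ → ℕ) (hd2 : ∀ k, 2 ≤ d k) (q : ℕ) (hq : 0 < q) :
    ∃ n, Dprod d n ∣ q ∧ pseudoAbs d q = 1 / (Dprod d n : ℝ) := by
  set S : Set ℝ := {x : ℝ | ∃ n : ℕ, Dprod d n ∣ q ∧ x = 1 / (Dprod d n : ℝ)} with hS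
  have hfin : S.Finite := by
    have : S ⊆ (fun n : ℕ => 1 / (Dprod d n : ℝ)) '' (Set.Iic q) := by
      rintro x ⟨n, hdvd, rfl⟩
      refine ⟨n, ?_, rfl⟩
      have h1 : 2 ^ n ≤ q := le_trans (two_pow_le_Dprod d hd2 n) (Nat.le_of_dvd hq hdvd)
      exact le_trans (Nat.lt_two_pow_self (n := n)).le h1
    exact Set.Finite.subset ((Set.finite_Iic q).image _) this
  have hne : S.Nonempty := ⟨1, 0, by simp [Dprod]⟩
  have := hne.csInf_mem hfin
  rw [hS] at this
  obtain ⟨n, hdvd, hx⟩ := this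
  exact ⟨n, hdvd, hx⟩

/-- If `q₁, q₂` both satisfy `|q_s|_𝒟 ≤ (c/q_s)^i`, then
`gcd(q₁, q₂) ≥ c^{-i} (min q₁ q₂)^i`. -/
theorem gcd_ge_of_pseudoAbs_le (d : ℕ → ℕ) (hd2 : ∀ k, 2 ≤ d k)
    (hdbdd : ∃ M, ∀ k, d k ≤ M) (i c : ℝ) (hi : 0 < i) (hi' : i < 1) (hc : 0 < c)
    (q₁ q₂ : ℕ) (hq₁ : 0 < q₁) (hq₂ : 0 < q₂)
    (hC₁ : pseudoAbs d q₁ ≤ (c / (q₁ : ℝ)) ^ i) (hC₂ : pseudoAbs d q₂ ≤ (c / (q₂ : ℝ)) ^ i) :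
    (Nat.gcd q₁ q₂ : ℝ) ≥ c ^ (-i) * ((min q₁ q₂ : ℕ) : ℝ) ^ i := by
  obtain ⟨n₁, hdvd₁, he₁⟩ := pseudoAbs_attained d hd2 q₁ hq₁
  obtain ⟨n₂, hdvd₂, he₂⟩ := pseudoAbs_attained d hd2 q₂ hq₂
  have key : ∀ (n : ℕ) (q : ℕ), 0 < q → (1 : ℝ) / (Dprod d n : ℝ) ≤ (c / (q : ℝ)) ^ i →
      ((q : ℝ) / c) ^ i ≤ (Dprod d n : ℝ) := by
    intro n q hq h
    have hD : (0 : ℝ) < (Dprod d n : ℝ) := by exact_mod_cast Dprod_pos d hd2 n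
    have hcq : (0 : ℝ) < c / (q : ℝ) := div_pos hc (by exact_mod_cast hq)
    have hpow : (0 : ℝ) < (c / (q : ℝ)) ^ i := Real.rpow_pos_of_pos hcq i
    have : ((c / (q : ℝ)) ^ i)⁻¹ ≤ (Dprod d n : ℝ) := by
      rw [inv_le_comm₀ hpow hD, ← one_div]
      exact h
    calc ((q : ℝ) / c) ^ i = ((c / (q : ℝ))⁻¹) ^ i := by rw [inv_div]
      _ = ((c / (q : ℝ)) ^ i)⁻¹ := Real.inv_rpow hcq.le i
      _ ≤ _ := this
  rw [he₁] at hC₁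
  rw [he₂] at hC₂
  have k₁ := key n₁ q₁ hq₁ hC₁
  have k₂ := key n₂ q₂ hq₂ hC₂
  set m := min n₁ n₂ with hm
  have hgcddvd : Dprod d m ∣ Nat.gcd q₁ q₂ :=
    Nat.dvd_gcd (dvd_trans (Dprod_dvd d (min_le_left _ _)) hdvd₁)
      (dvd_trans (Dprod_dvd d (min_le_right _ _)) hdvd₂)
  have hgcdpos : 0 < Nat.gcd q₁ q₂ := Nat.gcd_pos_of_pos_left _ hq₁
  have hgcd : (Dprod d m : ℝ) ≤ (Nat.gcd q₁ q₂ : ℝ) := by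
    exact_mod_cast Nat.le_of_dvd hgcdpos hgcddvd
  have hminpos : (0 : ℝ) < ((min q₁ q₂ : ℕ) : ℝ) := by
    have : 0 < min q₁ q₂ := lt_min hq₁ hq₂
    exact_mod_cast this
  have hDm : ((min q₁ q₂ : ℕ) : ℝ) ^ i / c ^ i ≤ (Dprod d m : ℝ) := by
    have step : ∀ (s : ℕ) (qs : ℕ), 0 < qs → m = s → ((qs : ℝ) / c) ^ i ≤ (Dprod d s : ℝ) →
        min q₁ q₂ ≤ qs → ((min q₁ q₂ : ℕ) : ℝ) ^ i / c ^ i ≤ (Dprod d m : ℝ) := by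
      intro s qs hqs hms hk hmin
      rw [hms]
      refine le_trans ?_ hk
      rw [← Real.div_rpow hminpos.le hc.le]
      apply Real.rpow_le_rpow (by positivity) _ hi.le
      gcongr
      all_goals exact_mod_cast hmin
    rcases le_total n₁ n₂ with h | h
    · exact step n₁ q₁ hq₁ (min_eq_left h) k₁ (min_le_left _ _)
    · exact step n₂ q₂ hq₂ (min_eq_right h) k₂ (min_le_right _ _)
  have : c ^ (-i) * ((min q₁ q₂ : ℕ) : ℝ) ^ i = ((min q₁ q₂ : ℕ) : ℝ) ^ i / c ^ i := by
    rw [Real.rpow_neg hc.le, div_eq_mul_inv, mul_comm]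
  rw [ge_iff_le, this]
  exact le_trans hDm hgcd
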